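/- Let f, g : Finset (Fin n) → ℝ be nonnegative, monotone, submodular, with g having positive marginals and curvature c_g. Let S be the output of the greedy algorithm with final selection step maximizing f(S_k) - g(S_k) over the greedy chain. Then for every S* ⊆ Fin n: (1 - e^{c_g - 1})·f(S*) - g(S*) ≤ f(S) - g(S). -/

import Mathlib

lemma marg_sum_le {n : ℕ} (f : Finset (Fin n) → ℝ)
    (hsub : ∀ S T : Finset (Fin n), f (S ∪ T) + f (S ∩ T) ≤ f S + f T)
    (A B : Finset (Fin n)) :
    f (A ∪ B) ≤ f A + ∑ j ∈ B \ A, (f (insert j A) - f A) := by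
  induction B using Finset.induction_on with
  | empty => simp
  | @insert b B hb ih =>
    by_cases hbA : b ∈ A
    · have h1 : A ∪ insert b B = A ∪ B := by
        ext x; by_cases hx : x = b <;> simp [hx, hbA]
      have h2 : insert b B \ A = B \ A := by
        ext x; by_cases hx : x = b <;> simp [hx, hbA, hb]
      rw [h1, h2]; exact ih
    · have h1 : A ∪ insert b B = insert b (A ∪ B) := by
        ext x; by_cases hx : x = b <;> simp [hx]
      have h2 : insert b B \ A = insert b (B \ A) := by
        ext x; by_cases hx : x = b <;> simp [hx, hbA]
      have hbBA : b ∉ B \ A := by simp [hb]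
      rw [h1, h2, Finset.sum_insert hbBA]
      have key := hsub (insert b A) (A ∪ B)
      have e1 : insert b A ∪ (A ∪ B) = insert b (A ∪ B) := by
        ext x; by_cases hx : x = b <;> simp [hx] <;> tauto
      have e2 : insert b A ∩ (A ∪ B) = A := by
        ext x; by_cases hx : x = b <;> simp [hx, hbA, hb]; tauto
      rw [e1, e2] at key
      linarith

lemma curv_sum_le {n : ℕ} (g : Finset (Fin n) → ℝ)
    (hsub : ∀ S T : Finset (Fin n), g (S ∪ T) + g (S ∩ T) ≤ g S + g T)
    (B : Finset (Fin n)) :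
    ∑ j ∈ B, (g Finset.univ - g (Finset.univ.erase j)) ≤ g B - g ∅ := by
  induction B using Finset.induction_on with
  | empty => simp
  | @insert b B hb ih =>
    rw [Finset.sum_insert hb]
    have key := hsub (insert b B) (Finset.univ.erase b)
    have e1 : insert b B ∪ Finset.univ.erase b = Finset.univ := by
      ext x; by_cases hx : x = b <;> simp [hx]
    have e2 : insert b B ∩ Finset.univ.erase b = B := by
      ext x; by_cases hx : x = b <;> simp [hx, hb]
    rw [e1, e2] at key
    linarith

/-- The greedy chain of the Ψ-Greedy algorithm: start from ∅ and at each step add the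
element maximizing the ratio of marginal gains of `f` over `g`. -/
def GreedyChain (n : ℕ) (f g : Finset (Fin n) → ℝ) (S : ℕ → Finset (Fin n)) : Prop :=
  S 0 = ∅ ∧ ∀ k < n, ∃ i ∉ S k,
    S (k + 1) = insert i (S k) ∧
    ∀ j ∉ S k,
      (f (insert j (S k)) - f (S k)) / (g (insert j (S k)) - g (S k)) ≤
        (f (insert i (S k)) - f (S k)) / (g (insert i (S k)) - g (S k))

theorem stmt_14 (n : ℕ) (hn : 0 < n) (f g : Finset (Fin n) → ℝ)
    (hfnn : ∀ S : Finset (Fin n), 0 ≤ f S) (hgnn : ∀ S : Finset (Fin n), 0 ≤ g S)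
    (hfsub : ∀ S T : Finset (Fin n), f (S ∪ T) + f (S ∩ T) ≤ f S + f T)
    (hgsub : ∀ S T : Finset (Fin n), g (S ∪ T) + g (S ∩ T) ≤ g S + g T)
    (hfmono : ∀ A B : Finset (Fin n), A ⊆ B → f A ≤ f B)
    (hgmono : ∀ A B : Finset (Fin n), A ⊆ B → g A ≤ g B)
    (hgmarg : ∀ (A : Finset (Fin n)) (i : Fin n), i ∉ A → 0 < g (insert i A) - g A)
    (cg : ℝ)
    (hcg : cg = 1 - Finset.univ.inf'
      (Finset.univ_nonempty_iff.mpr (Fin.pos_iff_nonempty.mp hn))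
      (fun i : Fin n => (g Finset.univ - g (Finset.univ.erase i)) / (g {i} - g ∅)))
    (S : ℕ → Finset (Fin n)) (hchain : GreedyChain n f g S)
    (Sout : Finset (Fin n))
    (hmem : ∃ k ≤ n, Sout = S k)
    (hbest : ∀ k ≤ n, f (S k) - g (S k) ≤ f Sout - g Sout) :
    ∀ Sstar : Finset (Fin n),
      (1 - Real.exp (cg - 1)) * f Sstar - g Sstar ≤ f Sout - g Sout := by
  classical
  intro Sstar
  obtain ⟨hS0, hstep⟩ := hchain
  -- basic chain facts
  have hcard : ∀ k, k ≤ n → (S k).card = k := by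
    intro k
    induction k with
    | zero => intro _; simp [hS0]
    | succ k ih =>
      intro hk
      obtain ⟨i, hi, hins, -⟩ := hstep k (by omega)
      rw [hins, Finset.card_insert_of_notMem hi, ih (by omega)]
  have hSn : S n = Finset.univ := by
    apply Finset.eq_univ_of_card
    rw [hcard n le_rfl, Fintype.card_fin]
  have hsubstep : ∀ k < n, S k ⊆ S (k + 1) := by
    intro k hk
    obtain ⟨i, hi, hins, -⟩ := hstep k hk
    rw [hins]; exact Finset.subset_insert _ _
  have hgstep : ∀ k < n, 0 < g (S (k + 1)) - g (S k) := by
    intro k hk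
    obtain ⟨i, hi, hins, -⟩ := hstep k hk
    rw [hins]; exact hgmarg _ _ hi
  have hfstep : ∀ k < n, f (S k) ≤ f (S (k + 1)) := fun k hk =>
    hfmono _ _ (hsubstep k hk)
  -- trivial case: Sstar = ∅
  by_cases hSe : Sstar = ∅
  · have h0 := hbest 0 (by omega)
    rw [hS0] at h0
    have he : 0 < Real.exp (cg - 1) := Real.exp_pos _
    have hf0 : 0 ≤ f (∅ : Finset (Fin n)) := hfnn _
    subst hSe
    linarith [mul_nonneg he.le hf0]
  obtain ⟨j0, hj0⟩ := Finset.nonempty_of_ne_empty hSe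
  -- abbreviations
  set fs := f Sstar with hfs
  set gs := g Sstar with hgs
  set Γ : ℝ := ∑ j ∈ Sstar, (g {j} - g ∅) with hΓ
  have hsingle : ∀ j : Fin n, 0 < g {j} - g ∅ := by
    intro j
    have := hgmarg ∅ j (Finset.notMem_empty j)
    simpa using this
  have hΓpos : 0 < Γ := Finset.sum_pos (fun j _ => hsingle j) ⟨j0, hj0⟩
  -- per-step key inequality
  have hkey : ∀ k < n, 0 ≤ fs - f (S k) →
      (g (S (k + 1)) - g (S k)) * (fs - f (S k)) ≤ Γ * (f (S (k + 1)) - f (S k)) := by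
    intro k hk h0
    obtain ⟨i, hi, hins, hmax⟩ := hstep k hk
    have hδ : 0 < g (S (k + 1)) - g (S k) := hgstep k hk
    have hgain : 0 ≤ f (S (k + 1)) - f (S k) := by linarith [hfstep k hk]
    by_cases hsubs : Sstar ⊆ S k
    · have : fs ≤ f (S k) := hfmono _ _ hsubs
      have h00 : fs - f (S k) = 0 := le_antisymm (by linarith) h0
      rw [h00]
      rw [mul_zero]; exact mul_nonneg hΓpos.le hgain
    · -- Sstar \ S k nonempty
      have hne : (Sstar \ S k).Nonempty := by
        obtain ⟨y, hy1, hy2⟩ := Finset.not_subset.mp hsubs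
        exact ⟨y, Finset.mem_sdiff.mpr ⟨hy1, hy2⟩⟩
      set G : ℝ := ∑ j ∈ Sstar \ S k, (g (insert j (S k)) - g (S k)) with hG
      have hGpos : 0 < G :=
        Finset.sum_pos (fun j hj => hgmarg _ _ (Finset.mem_sdiff.mp hj).2) hne
      set ρ : ℝ := (f (S (k + 1)) - f (S k)) / (g (S (k + 1)) - g (S k)) with hρ
      have hρnn : 0 ≤ ρ := div_nonneg hgain hδ.le
      have hρδ : ρ * (g (S (k + 1)) - g (S k)) = f (S (k + 1)) - f (S k) :=
        div_mul_cancel₀ _ hδ.ne'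
      -- each f-marginal bounded by ρ times g-marginal
      have hmargb : ∀ j ∈ Sstar \ S k,
          f (insert j (S k)) - f (S k) ≤ ρ * (g (insert j (S k)) - g (S k)) := by
        intro j hj
        have hjk : j ∉ S k := (Finset.mem_sdiff.mp hj).2
        have hgj : 0 < g (insert j (S k)) - g (S k) := hgmarg _ _ hjk
        have := hmax j hjk
        rw [← hins] at this
        rw [← hρ] at this
        calc f (insert j (S k)) - f (S k)
            = (f (insert j (S k)) - f (S k)) / (g (insert j (S k)) - g (S k)) *
              (g (insert j (S k)) - g (S k)) := (div_mul_cancel₀ _ hgj.ne').symm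
          _ ≤ ρ * (g (insert j (S k)) - g (S k)) := by
              exact mul_le_mul_of_nonneg_right this hgj.le
      -- sum of f marginals bound
      have hfsum : fs - f (S k) ≤ ρ * G := by
        have h1 : fs ≤ f (S k ∪ Sstar) :=
          hfmono _ _ Finset.subset_union_right
        have h2 := marg_sum_le f hfsub (S k) Sstar
        have h3 : ∑ j ∈ Sstar \ S k, (f (insert j (S k)) - f (S k)) ≤
            ∑ j ∈ Sstar \ S k, ρ * (g (insert j (S k)) - g (S k)) :=
          Finset.sum_le_sum hmargb
        rw [← Finset.mul_sum, ← hG] at h3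
        linarith
      -- G ≤ Γ
      have hGΓ : G ≤ Γ := by
        have h1 : ∀ j ∈ Sstar \ S k,
            g (insert j (S k)) - g (S k) ≤ g {j} - g ∅ := by
          intro j hj
          have hjk : j ∉ S k := (Finset.mem_sdiff.mp hj).2
          have key := hgsub {j} (S k)
          have e1 : {j} ∪ S k = insert j (S k) := by
            ext x; simp [Finset.mem_insert]
          have e2 : {j} ∩ S k = ∅ := by
            ext x; by_cases hx : x = j <;> simp [hx, hjk]
          rw [e1, e2] at key
          linarith
        calc G ≤ ∑ j ∈ Sstar \ S k, (g {j} - g ∅) := Finset.sum_le_sum h1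
          _ ≤ Γ := Finset.sum_le_sum_of_subset_of_nonneg
              (Finset.sdiff_subset) (fun j _ _ => (hsingle j).le)
      calc (g (S (k + 1)) - g (S k)) * (fs - f (S k))
          ≤ (g (S (k + 1)) - g (S k)) * (ρ * G) :=
            mul_le_mul_of_nonneg_left hfsum hδ.le
        _ = (ρ * (g (S (k + 1)) - g (S k))) * G := by ring
        _ = (f (S (k + 1)) - f (S k)) * G := by rw [hρδ]
        _ ≤ (f (S (k + 1)) - f (S k)) * Γ := mul_le_mul_of_nonneg_left hGΓ hgain
        _ = Γ * (f (S (k + 1)) - f (S k)) := by ring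
  -- exponential decay bound
  have hexp : ∀ k, k ≤ n → fs - f (S k) ≤ fs * Real.exp (-(g (S k) - g ∅) / Γ) := by
    intro k
    induction k with
    | zero =>
      intro _
      rw [hS0]
      simp only [sub_self, neg_zero, zero_div, Real.exp_zero, mul_one]
      linarith [hfnn (∅ : Finset (Fin n))]
    | succ k ih =>
      intro hk1
      have hk : k < n := by omega
      have ihk := ih (by omega)
      by_cases h0 : fs - f (S k) ≤ 0
      · have : fs - f (S (k + 1)) ≤ 0 := by linarith [hfstep k hk]
        have : (0:ℝ) ≤ fs * Real.exp (-(g (S (k + 1)) - g ∅) / Γ) :=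
          mul_nonneg (hfnn _) (Real.exp_pos _).le
        linarith
      · push_neg at h0
        have hδ : 0 < g (S (k + 1)) - g (S k) := hgstep k hk
        have hkeyk := hkey k hk h0.le
        -- fs - f (S (k+1)) ≤ (fs - f (S k)) * (1 - δ/Γ)
        have hstep2 : fs - f (S (k + 1)) ≤
            (fs - f (S k)) * (1 - (g (S (k + 1)) - g (S k)) / Γ) := by
          have : (g (S (k + 1)) - g (S k)) / Γ * (fs - f (S k)) ≤
              f (S (k + 1)) - f (S k) := by
            rw [div_mul_eq_mul_div, div_le_iff₀ hΓpos]
            linarith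
          linarith
        have hexpfac : 1 - (g (S (k + 1)) - g (S k)) / Γ ≤
            Real.exp (-((g (S (k + 1)) - g (S k)) / Γ)) := by
          have := Real.add_one_le_exp (-((g (S (k + 1)) - g (S k)) / Γ))
          linarith
        by_cases hfac : 1 - (g (S (k + 1)) - g (S k)) / Γ ≤ 0
        · have hneg : (fs - f (S k)) * (1 - (g (S (k + 1)) - g (S k)) / Γ) ≤ 0 :=
            mul_nonpos_of_nonneg_of_nonpos h0.le hfac
          have : (0:ℝ) ≤ fs * Real.exp (-(g (S (k + 1)) - g ∅) / Γ) :=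
            mul_nonneg (hfnn _) (Real.exp_pos _).le
          linarith
        · push_neg at hfac
          have hmul : (fs - f (S k)) * (1 - (g (S (k + 1)) - g (S k)) / Γ) ≤
              (fs * Real.exp (-(g (S k) - g ∅) / Γ)) *
                Real.exp (-((g (S (k + 1)) - g (S k)) / Γ)) :=
            mul_le_mul ihk hexpfac hfac.le
              (mul_nonneg (hfnn _) (Real.exp_pos _).le)
          have heq : fs * Real.exp (-(g (S k) - g ∅) / Γ) *
              Real.exp (-((g (S (k + 1)) - g (S k)) / Γ)) =
              fs * Real.exp (-(g (S (k + 1)) - g ∅) / Γ) := by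
            rw [mul_assoc, ← Real.exp_add]
            congr 1
            field_simp
            congr 1
            ring
          rw [heq] at hmul
          linarith
  -- curvature bound : (1 - cg) * Γ ≤ gs - g ∅
  have hcurv : (1 - cg) * Γ ≤ gs - g ∅ := by
    have h1 : ∀ j ∈ Sstar, (1 - cg) * (g {j} - g ∅) ≤
        g Finset.univ - g (Finset.univ.erase j) := by
      intro j _
      have hle : 1 - cg ≤ (g Finset.univ - g (Finset.univ.erase j)) / (g {j} - g ∅) := by
        rw [hcg]
        have h2 : Finset.univ.inf'
            (Finset.univ_nonempty_iff.mpr (Fin.pos_iff_nonempty.mp hn))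
            (fun i : Fin n => (g Finset.univ - g (Finset.univ.erase i)) / (g {i} - g ∅)) ≤
            (g Finset.univ - g (Finset.univ.erase j)) / (g {j} - g ∅) :=
          Finset.inf'_le _ (Finset.mem_univ j)
        linarith
      have hj := hsingle j
      calc (1 - cg) * (g {j} - g ∅)
          ≤ (g Finset.univ - g (Finset.univ.erase j)) / (g {j} - g ∅) * (g {j} - g ∅) :=
            mul_le_mul_of_nonneg_right hle hj.le
        _ = g Finset.univ - g (Finset.univ.erase j) := div_mul_cancel₀ _ hj.ne'
    calc (1 - cg) * Γ = ∑ j ∈ Sstar, (1 - cg) * (g {j} - g ∅) := by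
          rw [hΓ, Finset.mul_sum]
      _ ≤ ∑ j ∈ Sstar, (g Finset.univ - g (Finset.univ.erase j)) :=
          Finset.sum_le_sum h1
      _ ≤ g Sstar - g ∅ := curv_sum_le g hgsub Sstar
  -- crossing index
  have hgsempty : g ∅ < gs := by
    have h1 : g {j0} ≤ gs := hgmono _ _ (Finset.singleton_subset_iff.mpr hj0)
    linarith [hsingle j0]
  have hPn : gs ≤ g (S n) := by rw [hSn]; exact hgmono _ _ (Finset.subset_univ _)
  have hEx : ∃ m, m ≤ n ∧ gs ≤ g (S m) := ⟨n, le_rfl, hPn⟩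
  have hm := Nat.find_spec hEx
  have hm0 : Nat.find hEx ≠ 0 := by
    intro h
    rw [h, hS0] at hm
    linarith [hm.2]
  obtain ⟨k, hkeq⟩ : ∃ k, Nat.find hEx = k + 1 := ⟨Nat.find hEx - 1, by omega⟩
  rw [hkeq] at hm
  have hkn : k < n := by omega
  have hklt : g (S k) < gs := by
    have hmin := Nat.find_min hEx (show k < Nat.find hEx by omega)
    by_contra hcon
    push_neg at hcon
    exact hmin ⟨by omega, hcon⟩
  have hkge : gs ≤ g (S (k + 1)) := hm.2
  have hδ : 0 < g (S (k + 1)) - g (S k) := hgstep k hkn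
  set lam : ℝ := (gs - g (S k)) / (g (S (k + 1)) - g (S k)) with hlam
  have hlam0 : 0 ≤ lam := div_nonneg (by linarith) hδ.le
  have hlam1 : lam ≤ 1 := by
    rw [hlam, div_le_one hδ]
    linarith
  have hlamδ : lam * (g (S (k + 1)) - g (S k)) = gs - g (S k) :=
    div_mul_cancel₀ _ hδ.ne'
  -- the convex combination of f values
  have hfpart : fs * (1 - Real.exp (-(gs - g ∅) / Γ)) ≤
      f (S k) + lam * (f (S (k + 1)) - f (S k)) := by
    have hexpnn : (0:ℝ) ≤ fs * Real.exp (-(gs - g ∅) / Γ) :=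
      mul_nonneg (hfnn _) (Real.exp_pos _).le
    by_cases h0 : fs - f (S k) ≤ 0
    · have hgain : 0 ≤ f (S (k + 1)) - f (S k) := by linarith [hfstep k hkn]
      have hlg : 0 ≤ lam * (f (S (k + 1)) - f (S k)) := mul_nonneg hlam0 hgain
      linarith
    · push_neg at h0
      have hkeyk := hkey k hkn h0.le
      have hgain1 : lam * ((g (S (k + 1)) - g (S k)) * (fs - f (S k)) / Γ) ≤
          lam * (f (S (k + 1)) - f (S k)) := by
        apply mul_le_mul_of_nonneg_left _ hlam0
        rw [div_le_iff₀ hΓpos]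
        linarith
      have heq1 : lam * ((g (S (k + 1)) - g (S k)) * (fs - f (S k)) / Γ) =
          (gs - g (S k)) / Γ * (fs - f (S k)) := by
        linear_combination (fs - f (S k)) / Γ * hlamδ
      rw [heq1] at hgain1
      -- now: f (S k) + (gs - g(S k))/Γ * (fs - f (S k)) ≥ fs * (1 - exp(-(gs - g∅)/Γ))
      set t : ℝ := (gs - g (S k)) / Γ with ht
      have ht0 : 0 ≤ t := div_nonneg (by linarith) hΓpos.le
      by_cases hfac : 1 - t ≤ 0
      · have : (fs - f (S k)) * (1 - t) ≤ 0 :=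
          mul_nonpos_of_nonneg_of_nonpos h0.le hfac
        linarith
      · push_neg at hfac
        have hexpfac : 1 - t ≤ Real.exp (-t) := by
          have := Real.add_one_le_exp (-t); linarith
        have hmul : (fs - f (S k)) * (1 - t) ≤
            (fs * Real.exp (-(g (S k) - g ∅) / Γ)) * Real.exp (-t) :=
          mul_le_mul (hexp k (by omega)) hexpfac hfac.le
            (mul_nonneg (hfnn _) (Real.exp_pos _).le)
        have heq2 : fs * Real.exp (-(g (S k) - g ∅) / Γ) * Real.exp (-t) =
            fs * Real.exp (-(gs - g ∅) / Γ) := by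
          rw [mul_assoc, ← Real.exp_add]
          congr 1
          rw [ht]
          field_simp
          congr 1
          ring
        rw [heq2] at hmul
        linarith
  -- the exponent comparison
  have hexpcmp : Real.exp (-(gs - g ∅) / Γ) ≤ Real.exp (cg - 1) := by
    apply Real.exp_le_exp.mpr
    rw [div_le_iff₀ hΓpos]
    linarith
  -- finish
  have hout1 := hbest k (by omega)
  have hout2 := hbest (k + 1) (by omega)
  have hcomb : (1 - lam) * (f (S k) - g (S k)) + lam * (f (S (k + 1)) - g (S (k + 1))) ≤
      f Sout - g Sout := by
    have a1 : 0 ≤ (1 - lam) * ((f Sout - g Sout) - (f (S k) - g (S k))) :=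
      mul_nonneg (by linarith) (by linarith)
    have a2 : 0 ≤ lam * ((f Sout - g Sout) - (f (S (k + 1)) - g (S (k + 1)))) :=
      mul_nonneg hlam0 (by linarith)
    linarith [a1, a2]
  have hgcomb : (1 - lam) * g (S k) + lam * g (S (k + 1)) = gs := by
    linear_combination hlamδ
  have hfs0 : 0 ≤ fs := hfnn _
  have e3 : (1 - lam) * (f (S k) - g (S k)) + lam * (f (S (k + 1)) - g (S (k + 1))) =
      (f (S k) + lam * (f (S (k + 1)) - f (S k))) -
        ((1 - lam) * g (S k) + lam * g (S (k + 1))) := by ring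
  rw [e3, hgcomb] at hcomb
  have h5 := mul_le_mul_of_nonneg_left hexpcmp hfs0
  linarith [hfpart, hcomb, h5]
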